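/- Fix λ > 0 and an integer k ≥ 1. Let f_λ be the density of Lap(λ) and F_λ its CDF. Then ∫_{-∞}^{1} g(x)·(F_λ(x-1))^{k-1}·f_λ(0) dx = e^{k/λ} · ∫_{-∞}^{1} g(x)·(F_λ(x-2))^{k-1}·f_λ(1) dx, where g is any probability density on (-∞, 1). Hence the vanilla SVT requires noise scale Ω(k/ε) to satisfy ε-differential privacy in the worst case. -/

import Mathlib

open Real MeasureTheory

/-- Pr[Lap(l) > t] for the Laplace distribution with scale l,
density (1/(2l))·exp(-|y|/l). -/
noncomputable def lapTail (l t : ℝ) : ℝ :=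
  ∫ y in Set.Ioi t, (1 / (2 * l)) * Real.exp (-|y| / l)

/-- Pr[Lap(l) ≤ t]. -/
noncomputable def lapCDF (l t : ℝ) : ℝ :=
  ∫ y in Set.Iic t, (1 / (2 * l)) * Real.exp (-|y| / l)

open Set Filter in
lemma exp_div_integrableOn_Iic {l : ℝ} (hl : 0 < l) (t : ℝ) :
    IntegrableOn (fun y => Real.exp (y / l)) (Set.Iic t) := by
  have hc : 0 < 1 / l := by positivity
  have h1 : IntegrableOn (fun x => Real.exp (-(1/l) * x)) (Set.Ioi (-t)) :=
    exp_neg_integrableOn_Ioi _ hc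
  have h2 : Integrable ((Set.Ioi (-t)).indicator fun x => Real.exp (-(1/l) * x)) :=
    (integrable_indicator_iff measurableSet_Ioi).2 h1
  have h3 := h2.comp_neg
  have h4 : (fun y => ((Set.Ioi (-t)).indicator fun x => Real.exp (-(1/l) * x)) (-y))
      = (Set.Iio t).indicator (fun y => Real.exp (y / l)) := by
    ext x
    by_cases hx : x < t
    · simp only [Set.indicator_apply, Set.mem_Ioi, Set.mem_Iio, hx, if_true,
        neg_lt_neg_iff, hx]
      ring_nf
    · simp only [Set.indicator_apply, Set.mem_Ioi, Set.mem_Iio, hx, if_false,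
        neg_lt_neg_iff]
  rw [h4] at h3
  have h5 : IntegrableOn (fun y => Real.exp (y / l)) (Set.Iio t) :=
    (integrable_indicator_iff measurableSet_Iio).1 h3
  exact h5.mono_set_ae Iio_ae_eq_Iic.symm.le

open Set Filter in
lemma lapCDF_eq {l : ℝ} (hl : 0 < l) {t : ℝ} (ht : t ≤ 0) :
    lapCDF l t = (1/2) * Real.exp (t / l) := by
  have hcongr : lapCDF l t = ∫ y in Set.Iic t, (1/(2*l)) * Real.exp (y / l) := by
    apply setIntegral_congr_fun measurableSet_Iic
    intro y hy
    have hy0 : y ≤ 0 := le_trans hy ht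
    simp only [abs_of_nonpos hy0, neg_neg]
  rw [hcongr]
  have := integral_Iic_of_hasDerivAt_of_tendsto' (a := t)
    (f := fun y => (1/2) * Real.exp (y / l))
    (f' := fun y => (1/(2*l)) * Real.exp (y / l))
    (fun x _ => by
      have h := ((hasDerivAt_id x).div_const l).exp.const_mul (1/2 : ℝ)
      convert h using 1
      · rfl
      · rfl
      · simp only [id]; ring)
    ((exp_div_integrableOn_Iic hl t).const_mul _)
    (by
      have h1 : Tendsto (fun y : ℝ => y / l) atBot atBot :=
        tendsto_id.atBot_div_const hl
      have h2 := Real.tendsto_exp_atBot.comp h1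
      have := h2.const_mul (1/2 : ℝ)
      simpa using this)
  simpa using this

/-- vanilla SVT counterexample identity: the two output probabilities
are in exact ratio e^{k/λ}. -/
theorem stmt13 (l : ℝ) (hl : 0 < l) (k : ℕ) (hk : 1 ≤ k)
    (g : ℝ → ℝ) (hg0 : ∀ x, 0 ≤ g x) (hg1 : (∫ x in Set.Iio (1 : ℝ), g x) = 1) :
    (∫ x in Set.Iio (1 : ℝ),
        g x * (lapCDF l (x - 1)) ^ (k - 1) * ((1 / (2 * l)) * Real.exp (-|(0 : ℝ)| / l))) =
      Real.exp ((k : ℝ) / l) *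
        ∫ x in Set.Iio (1 : ℝ),
          g x * (lapCDF l (x - 2)) ^ (k - 1) * ((1 / (2 * l)) * Real.exp (-|(1 : ℝ)| / l)) := by
  rw [← MeasureTheory.integral_const_mul]
  apply setIntegral_congr_fun measurableSet_Iio
  intro x hx
  have hx1 : x < 1 := hx
  have h1 : x - 1 ≤ 0 := by linarith
  have h2 : x - 2 ≤ 0 := by linarith
  beta_reduce
  rw [lapCDF_eq hl h1, lapCDF_eq hl h2]
  simp only [abs_zero, abs_one, neg_zero, zero_div, Real.exp_zero]
  rw [mul_pow, mul_pow, ← Real.exp_nat_mul, ← Real.exp_nat_mul]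
  have hcast : ((k - 1 : ℕ) : ℝ) = (k : ℝ) - 1 := by
    push_cast [Nat.cast_sub hk]
    ring
  rw [hcast]
  have hkey : Real.exp ((k : ℝ) / l) * Real.exp ((-1 : ℝ) / l) *
      Real.exp (((k : ℝ) - 1) * ((x - 2) / l)) =
      Real.exp (((k : ℝ) - 1) * ((x - 1) / l)) := by
    rw [← Real.exp_add, ← Real.exp_add]
    congr 1
    field_simp
    ring
  rw [← hkey]
  ring
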